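/- Let G = (V, E) be a finite graph and x : E → {0,1}. Then x satisfies the multicut constraint Σ_{e ∈ C \ {e'}} x(e) ≥ x(e') for every cycle C and e' ∈ C if and only if x satisfies it for every chordless cycle C and every e' ∈ C. -/

import Mathlib

open SimpleGraph Walk

private lemma edge_mem_of_length_one {V : Type*} {G : SimpleGraph V} {u v : V}
    (w : G.Walk u v) (h : w.length = 1) : s(u, v) ∈ w.edges := by
  cases w with
  | nil => simp at h
  | cons hadj w' =>
    have h0 : w'.length = 0 := by simpa using h
    have := w'.eq_of_length_eq_zero h0
    subst this
    simp

private lemma end_mem_support_tail {V : Type*} {G : SimpleGraph V} {v : V}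
    (p : G.Walk v v) (h : p.length ≠ 0) : v ∈ p.support.tail := by
  cases p with
  | nil => simp at h
  | cons hadj p' =>
    rw [Walk.support_cons, List.tail_cons]
    exact p'.end_mem_support

private lemma perm_toFinset {α : Type*} [DecidableEq α] {l l' : List α} (h : l.Perm l') :
    l.toFinset = l'.toFinset := by
  ext a; simp [h.mem_iff]

private lemma aux_chordless {V : Type*} [Fintype V] [DecidableEq V] {G : SimpleGraph V}
    (x : Sym2 V → ℕ)
    (h2 : ∀ (v : V) (p : G.Walk v v), p.IsCycle →
      (∀ a ∈ p.support, ∀ b ∈ p.support, G.Adj a b → s(a, b) ∈ p.edges) →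
      ∀ e' ∈ p.edges, x e' ≤ ∑ e ∈ p.edges.toFinset.erase e', x e) :
    ∀ (n : ℕ) (v : V) (p : G.Walk v v), p.length ≤ n → p.IsCycle →
      ∀ e' ∈ p.edges, x e' ≤ ∑ e ∈ p.edges.toFinset.erase e', x e := by
  intro n
  induction n with
  | zero =>
    intro v p hlen hcyc e' he'
    have := hcyc.three_le_length
    omega
  | succ n IH =>
    intro v p hlen hcyc e' he'
    by_cases hchordless : ∀ a ∈ p.support, ∀ b ∈ p.support, G.Adj a b → s(a, b) ∈ p.edges
    · exact h2 v p hcyc hchordless e' he'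
    push_neg at hchordless
    obtain ⟨a, ha, b, hb, hab, hch⟩ := hchordless
    -- rotate the cycle to start at a
    set q : G.Walk a a := p.rotate a ha with hqdef
    have hqcyc : q.IsCycle := hcyc.rotate ha
    have hqperm : q.edges.Perm p.edges := (p.rotate_edges a ha).perm
    have hQP : q.edges.toFinset = p.edges.toFinset := perm_toFinset hqperm
    have hqlen : q.length = p.length := by
      rw [hqdef, rotate, length_append, Nat.add_comm, ← length_append, take_spec]
    have hchq : s(a, b) ∉ q.edges := fun h => hch (hqperm.mem_iff.mp h)
    have hne : a ≠ b := hab.ne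
    -- b is in q's support
    have hbq : b ∈ q.support := by
      have h1 : b ∈ p.support.tail := by
        rcases eq_or_ne b v with rfl | hbv
        · exact end_mem_support_tail p (by have := hcyc.three_le_length; omega)
        · rw [p.support_eq_cons] at hb
          rcases List.mem_cons.mp hb with h | h
          · exact absurd h hbv
          · exact h
      have h2 : b ∈ q.support.tail := ((support_rotate p a ha).mem_iff).mpr h1
      exact List.mem_of_mem_tail h2
    set t : G.Walk a b := q.takeUntil b hbq with htdef
    set d : G.Walk b a := q.dropUntil b hbq with hddef
    have hspec : t.append d = q := q.take_spec hbq
    -- support decomposition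
    have hsup : q.support.tail = t.support.tail ++ d.support.tail := by
      have h1 : q.support = t.support ++ d.support.tail := by
        rw [← hspec, support_append]
      rw [t.support_eq_cons] at h1
      have h2 : q.support = a :: (t.support.tail ++ d.support.tail) := by
        rw [h1, List.cons_append]
      rw [h2, List.tail_cons]
    have hnodup : (t.support.tail ++ d.support.tail).Nodup := hsup ▸ hqcyc.support_nodup
    rw [List.nodup_append] at hnodup
    obtain ⟨hnt, hnd, hdisj⟩ := hnodup
    have hbt : b ∈ t.support.tail := by
      have : b ∈ t.support := t.end_mem_support
      rw [t.support_eq_cons] at this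
      rcases List.mem_cons.mp this with h | h
      · exact absurd h.symm hne
      · exact h
    have had : a ∈ d.support.tail := by
      have : a ∈ d.support := d.end_mem_support
      rw [d.support_eq_cons] at this
      rcases List.mem_cons.mp this with h | h
      · exact absurd h hne
      · exact h
    have hat : a ∉ t.support.tail := fun h => hdisj _ h _ had rfl
    have hbd : b ∉ d.support.tail := fun h => hdisj _ hbt _ h rfl
    have htpath : t.IsPath := by
      rw [isPath_def, t.support_eq_cons, List.nodup_cons]
      exact ⟨hat, hnt⟩
    have hdpath : d.IsPath := by
      rw [isPath_def, d.support_eq_cons, List.nodup_cons]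
      exact ⟨hbd, hnd⟩
    have hcht : s(a, b) ∉ t.edges := fun h => hchq (q.edges_takeUntil_subset hbq h)
    have hchd : s(a, b) ∉ d.edges := fun h => hchq (q.edges_dropUntil_subset hbq h)
    -- the two smaller cycles
    set C1 : G.Walk b b := Walk.cons hab.symm t with hC1def
    set C2 : G.Walk a a := Walk.cons hab d with hC2def
    have hC1cyc : C1.IsCycle := by
      rw [hC1def, cons_isCycle_iff]
      exact ⟨htpath, by rwa [Sym2.eq_swap]⟩
    have hC2cyc : C2.IsCycle := by
      rw [hC2def, cons_isCycle_iff]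
      exact ⟨hdpath, hchd⟩
    -- length bookkeeping
    have hqsplit : t.length + d.length = q.length := by
      rw [← hspec, length_append]
    have ht1 : t.length ≠ 0 := fun h => hne (t.eq_of_length_eq_zero h)
    have hd1 : d.length ≠ 0 := fun h => hne (d.eq_of_length_eq_zero h).symm
    have ht2 : t.length ≠ 1 := fun h => hcht (by simpa using edge_mem_of_length_one t h)
    have hd2 : d.length ≠ 1 := fun h =>
      hchd (by rw [Sym2.eq_swap]; exact edge_mem_of_length_one d h)
    have hC1len : C1.length ≤ n := by
      rw [hC1def, length_cons]; omega
    have hC2len : C2.length ≤ n := by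
      rw [hC2def, length_cons]; omega
    -- edge decomposition
    have hE : t.edges ++ d.edges = q.edges := by rw [← edges_append, hspec]
    have hEnodup : (t.edges ++ d.edges).Nodup := hE ▸ hqcyc.isTrail.edges_nodup
    rw [List.nodup_append] at hEnodup
    obtain ⟨hEt, hEd, hEdisj⟩ := hEnodup
    have he'q : e' ∈ q.edges := hqperm.mem_iff.mpr he'
    have he'c : e' ≠ s(a, b) := fun h => hchq (h ▸ he'q)
    have hC1e : C1.edges = s(a, b) :: t.edges := by
      rw [hC1def, edges_cons, Sym2.eq_swap]
    have hC2e : C2.edges = s(a, b) :: d.edges := by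
      rw [hC2def, edges_cons]
    have hC1f : C1.edges.toFinset = insert s(a, b) t.edges.toFinset := by
      rw [hC1e, List.toFinset_cons]
    have hC2f : C2.edges.toFinset = insert s(a, b) d.edges.toFinset := by
      rw [hC2e, List.toFinset_cons]
    have hcTf : s(a, b) ∉ t.edges.toFinset := by simpa using hcht
    have hcDf : s(a, b) ∉ d.edges.toFinset := by simpa using hchd
    have hQf : q.edges.toFinset = t.edges.toFinset ∪ d.edges.toFinset := by
      rw [← hE, List.toFinset_append]
    have hFdisj : Disjoint t.edges.toFinset d.edges.toFinset := by
      rw [Finset.disjoint_left]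
      intro e het hed
      exact hEdisj _ (List.mem_toFinset.mp het) _ (List.mem_toFinset.mp hed) rfl
    -- the chord bound from the cycle not containing e'
    rw [← hQP]
    rcases List.mem_append.mp (hE ▸ he'q) with he't | he'd
    · -- e' in t; use C1 for e', C2 for chord
      have h1 : x e' ≤ ∑ e ∈ C1.edges.toFinset.erase e', x e :=
        IH b C1 hC1len hC1cyc e' (by rw [hC1e]; exact List.mem_cons_of_mem _ he't)
      have h2' : x s(a, b) ≤ ∑ e ∈ C2.edges.toFinset.erase s(a, b), x e :=
        IH a C2 hC2len hC2cyc s(a, b) (by rw [hC2e]; exact List.mem_cons_self)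
      rw [hC1f, Finset.erase_insert_of_ne (Ne.symm he'c),
        Finset.sum_insert (fun h => hcTf (Finset.mem_of_mem_erase h))] at h1
      rw [hC2f, Finset.erase_insert hcDf] at h2'
      have he'd2 : e' ∉ d.edges.toFinset := by
        simp only [List.mem_toFinset]
        exact fun h => hEdisj _ he't _ h rfl
      have hsplit : q.edges.toFinset.erase e' =
          (t.edges.toFinset.erase e') ∪ d.edges.toFinset := by
        rw [hQf, Finset.erase_union_distrib, Finset.erase_eq_of_notMem he'd2]
      rw [hsplit, Finset.sum_union (Finset.disjoint_of_subset_left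
        (Finset.erase_subset _ _) hFdisj)]
      omega
    · -- e' in d; use C2 for e', C1 for chord
      have h1 : x e' ≤ ∑ e ∈ C2.edges.toFinset.erase e', x e :=
        IH a C2 hC2len hC2cyc e' (by rw [hC2e]; exact List.mem_cons_of_mem _ he'd)
      have h2' : x s(a, b) ≤ ∑ e ∈ C1.edges.toFinset.erase s(a, b), x e :=
        IH b C1 hC1len hC1cyc s(a, b) (by rw [hC1e]; exact List.mem_cons_self)
      rw [hC2f, Finset.erase_insert_of_ne (Ne.symm he'c),
        Finset.sum_insert (fun h => hcDf (Finset.mem_of_mem_erase h))] at h1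
      rw [hC1f, Finset.erase_insert hcTf] at h2'
      have he't2 : e' ∉ t.edges.toFinset := by
        simp only [List.mem_toFinset]
        exact fun h => hEdisj _ h _ he'd rfl
      have hsplit : q.edges.toFinset.erase e' =
          t.edges.toFinset ∪ (d.edges.toFinset.erase e') := by
        rw [hQf, Finset.erase_union_distrib, Finset.erase_eq_of_notMem he't2]
      rw [hsplit, Finset.sum_union (Finset.disjoint_of_subset_right
        (Finset.erase_subset _ _) hFdisj)]
      omega

/-- a binary edge labeling satisfies the multicut inequality for every
cycle iff it satisfies it for every chordless cycle. -/
theorem stmt_6 {V : Type*} [Fintype V] [DecidableEq V] (G : SimpleGraph V)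
    (x : Sym2 V → ℕ)
    (hbin : ∀ u v : V, G.Adj u v → x s(u, v) = 0 ∨ x s(u, v) = 1) :
    (∀ (v : V) (p : G.Walk v v), p.IsCycle →
      ∀ e' ∈ p.edges, x e' ≤ ∑ e ∈ p.edges.toFinset.erase e', x e) ↔
    (∀ (v : V) (p : G.Walk v v), p.IsCycle →
      (∀ a ∈ p.support, ∀ b ∈ p.support, G.Adj a b → s(a, b) ∈ p.edges) →
      ∀ e' ∈ p.edges, x e' ≤ ∑ e ∈ p.edges.toFinset.erase e', x e) := by
  constructor
  · intro h v p hcyc _ e' he'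
    exact h v p hcyc e' he'
  · intro h2 v p hcyc e' he'
    exact aux_chordless x h2 p.length v p le_rfl hcyc e' he'
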